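/- Let u_min < 0, γ > 0, φ ≥ 0, h > 0 and w ≥ 0 be reals, let T_k and T_i be reals with T_i ≥ T_k + h, and let p_k, v_k : ℝ → ℝ be such that p_k is differentiable on [T_k, T_i] with p_k'(t) = v_k(t) there, v_k is differentiable on [T_k, T_i] with v_k'(t) ≥ u_min for all t there, and v_k(t) ≥ 0 for all t in [T_k, T_i]. If (1/2)·u_min·h^2 + v_k(T_k)·h − φ·w − γ > 0, then p_k(T_i) − p_k(T_k) > γ + φ·w. -/

import Mathlib

/-- Lemma 6: the rear-end safety constraint does not become active at the entry of
a zone if the minimum time headway h satisfies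
(1/2)·u_min·h² + v_k(T_k)·h − φ·w − γ > 0. -/
theorem stmt_9
    (u_min γ φ h w : ℝ) (hmin : u_min < 0) (hγ : 0 < γ) (hφ : 0 ≤ φ)
    (hh : 0 < h) (hw : 0 ≤ w)
    (T_k T_i : ℝ) (hTi : T_k + h ≤ T_i)
    (p_k v_k : ℝ → ℝ)
    (hp : ∀ t ∈ Set.Icc T_k T_i, HasDerivAt p_k (v_k t) t)
    (hvdiff : ∀ t ∈ Set.Icc T_k T_i, DifferentiableAt ℝ v_k t)
    (hu : ∀ t ∈ Set.Icc T_k T_i, u_min ≤ deriv v_k t)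
    (hvnn : ∀ t ∈ Set.Icc T_k T_i, 0 ≤ v_k t)
    (hcond : (1 / 2) * u_min * h ^ 2 + v_k T_k * h - φ * w - γ > 0) :
    p_k T_i - p_k T_k > γ + φ * w := by
  have hmemTk : T_k ∈ Set.Icc T_k T_i := ⟨le_refl _, by linarith⟩
  have hmemTkh : T_k + h ∈ Set.Icc T_k T_i := ⟨by linarith, hTi⟩
  -- Step 1: v_k t ≥ v_k T_k + u_min * (t - T_k) on [T_k, T_i]
  have hv_lb : ∀ t ∈ Set.Icc T_k T_i, v_k T_k + u_min * (t - T_k) ≤ v_k t := by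
    set f : ℝ → ℝ := fun t => v_k t - u_min * t with hf
    have hfd : ∀ t ∈ Set.Icc T_k T_i, DifferentiableAt ℝ f t := fun t ht =>
      (hvdiff t ht).sub ((differentiable_id.const_mul u_min).differentiableAt)
    have hmono : MonotoneOn f (Set.Icc T_k T_i) := by
      apply monotoneOn_of_deriv_nonneg (convex_Icc _ _)
      · exact fun t ht => (hfd t ht).continuousAt.continuousWithinAt
      · intro t ht
        rw [interior_Icc] at ht
        exact (hfd t (Set.Ioo_subset_Icc_self ht)).differentiableWithinAt
      · intro t ht
        rw [interior_Icc] at ht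
        have ht' := Set.Ioo_subset_Icc_self ht
        have : deriv f t = deriv v_k t - u_min := by
          have h1 : HasDerivAt f (deriv v_k t - u_min) t := by
            have := ((hvdiff t ht').hasDerivAt).sub
              ((hasDerivAt_id t).const_mul u_min)
            exact (by simpa [hf, mul_one] using this : HasDerivAt (v_k - fun y => u_min * y) (deriv v_k t - u_min) t)
          exact h1.deriv
        rw [this]
        linarith [hu t ht']
    intro t ht
    have := hmono hmemTk ht ht.1
    simp only [hf] at this
    nlinarith
  -- Step 2: p_k is monotone on [T_k, T_i]
  have hpmono : MonotoneOn p_k (Set.Icc T_k T_i) := by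
    apply monotoneOn_of_deriv_nonneg (convex_Icc _ _)
    · exact fun t ht => (hp t ht).continuousAt.continuousWithinAt
    · intro t ht
      rw [interior_Icc] at ht
      exact (hp t (Set.Ioo_subset_Icc_self ht)).differentiableAt.differentiableWithinAt
    · intro t ht
      rw [interior_Icc] at ht
      have ht' := Set.Ioo_subset_Icc_self ht
      rw [(hp t ht').deriv]
      exact hvnn t ht'
  -- Step 3: the quadratic lower bound on [T_k, T_k+h]
  set q : ℝ → ℝ := fun t => p_k t - v_k T_k * t - u_min / 2 * (t - T_k) ^ 2 with hq
  have hqd : ∀ t ∈ Set.Icc T_k T_i,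
      HasDerivAt q (v_k t - v_k T_k - u_min * (t - T_k)) t := by
    intro t ht
    have h1 : HasDerivAt (fun t : ℝ => v_k T_k * t) (v_k T_k) t := by
      simpa using (hasDerivAt_id t).const_mul (v_k T_k)
    have h2 : HasDerivAt (fun t : ℝ => u_min / 2 * (t - T_k) ^ 2)
        (u_min * (t - T_k)) t := by
      have h3 : HasDerivAt (fun t : ℝ => (t - T_k) ^ 2) (2 * (t - T_k)) t := by
        exact (by simpa using ((hasDerivAt_id t).sub_const T_k).pow 2 : HasDerivAt ((fun x => x - T_k) ^ 2) (2 * (t - T_k)) t)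
      have : HasDerivAt (fun y : ℝ => u_min / 2 * (y - T_k) ^ 2) (u_min / 2 * (2 * (t - T_k))) t := h3.const_mul (u_min / 2)
      convert this using 1
      ring
    exact ((hp t ht).sub h1).sub h2
  have hsub : Set.Icc T_k (T_k + h) ⊆ Set.Icc T_k T_i :=
    Set.Icc_subset_Icc_right hTi
  have hqmono : MonotoneOn q (Set.Icc T_k (T_k + h)) := by
    apply monotoneOn_of_deriv_nonneg (convex_Icc _ _)
    · exact fun t ht => (hqd t (hsub ht)).continuousAt.continuousWithinAt
    · intro t ht
      rw [interior_Icc] at ht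
      exact (hqd t (hsub (Set.Ioo_subset_Icc_self ht))).differentiableAt.differentiableWithinAt
    · intro t ht
      rw [interior_Icc] at ht
      have ht' := hsub (Set.Ioo_subset_Icc_self ht)
      rw [(hqd t ht').deriv]
      have := hv_lb t ht'
      linarith
  have hq1 : q T_k ≤ q (T_k + h) :=
    hqmono (Set.left_mem_Icc.mpr (by linarith)) (Set.right_mem_Icc.mpr (by linarith))
      (by linarith)
  have hq2 : p_k (T_k + h) - p_k T_k ≥ v_k T_k * h + u_min / 2 * h ^ 2 := by
    simp only [hq] at hq1
    nlinarith
  have hp2 : p_k (T_k + h) ≤ p_k T_i := hpmono hmemTkh (Set.right_mem_Icc.mpr (by linarith)) hTi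
  nlinarith
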